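/- Conditional ghost-connection probabilities and their independence (finite-graph version of Proposition 3.2 and of Proposition B in the Appendix): for every ω̃ ∈ {0,1}^E and every finite collection C_1, …, C_m of pairwise distinct clusters of ω̃, under P̂_{J,H} conditioned on {ω|_E = ω̃} one has P̂_{J,H}( C_j ↔ g for all j = 1,…,m | ω|_E = ω̃ ) = ∏_{j=1}^m tanh(H(C_j)); in particular the events {C_j ↔ g} are (conditionally) mutually independent, each with probability tanh(H(C_j)). -/

import Mathlib

open scoped Classical

namespace FK

variable {V : Type*} [Fintype V] [DecidableEq V]

/-- Internal bond configurations on the edge set `E`. -/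
abbrev Config (E : Finset (Sym2 V)) : Type _ := {e : Sym2 V // e ∈ E} → Bool

/-- Full bond configurations: internal edges together with the ghost edges
(one for each vertex). -/
abbrev GConfig (E : Finset (Sym2 V)) : Type _ := Config E × (V → Bool)

/-- Two vertices are adjacent if they are distinct and joined by an open internal edge. -/
def adj (E : Finset (Sym2 V)) (ω : Config E) (u v : V) : Prop :=
  u ≠ v ∧ ∃ h : s(u, v) ∈ E, ω ⟨s(u, v), h⟩ = true

/-- The same-cluster relation of an internal configuration. -/
def conn (E : Finset (Sym2 V)) (ω : Config E) (u v : V) : Prop :=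
  Relation.ReflTransGen (adj E ω) u v

/-- The cluster of a vertex. -/
noncomputable def cluster (E : Finset (Sym2 V)) (ω : Config E) (v : V) : Finset V :=
  Finset.univ.filter (fun u => conn E ω v u)

/-- The set of clusters (connected components) of an internal configuration. -/
noncomputable def clusters (E : Finset (Sym2 V)) (ω : Config E) : Finset (Finset V) :=
  Finset.univ.image (cluster E ω)

/-- Adjacency in the extended graph, where `none` is the ghost vertex `g`. -/
def adjG (E : Finset (Sym2 V)) (ω : GConfig E) : Option V → Option V → Prop
  | some u, some v => adj E ω.1 u v
  | some u, none => ω.2 u = true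
  | none, some v => ω.2 v = true
  | none, none => False

/-- Connectivity in the extended graph (with the ghost vertex `none`). -/
def connG (E : Finset (Sym2 V)) (ω : GConfig E) (x y : Option V) : Prop :=
  Relation.ReflTransGen (adjG E ω) x y

/-- Number of connected components of the extended graph not containing the ghost. -/
noncomputable def kGhost (E : Finset (Sym2 V)) (ω : GConfig E) : ℕ :=
  (((Finset.univ : Finset V).filter (fun v => ¬ connG E ω (some v) none)).image
    (fun v => Finset.univ.filter (fun u : V => connG E ω (some v) (some u)))).card

/-- The product over internal edges of the usual FK edge weights. -/
noncomputable def edgeWeight (J : Sym2 V → ℝ) (E : Finset (Sym2 V)) (ω : Config E) : ℝ :=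
  ∏ e : {e : Sym2 V // e ∈ E},
    if ω e then 1 - Real.exp (-2 * J e.1) else Real.exp (-2 * J e.1)

/-- Unnormalized FK (q = 2) weight with ghost. -/
noncomputable def fkWeight (J : Sym2 V → ℝ) (H : V → ℝ) (E : Finset (Sym2 V))
    (ω : GConfig E) : ℝ :=
  2 ^ kGhost E ω * edgeWeight J E ω.1 *
    ∏ v, if ω.2 v then 1 - Real.exp (-2 * H v) else Real.exp (-2 * H v)

/-- The FK (q = 2) random-cluster measure with ghost. -/
noncomputable def fkProb (J : Sym2 V → ℝ) (H : V → ℝ) (E : Finset (Sym2 V))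
    (ω : GConfig E) : ℝ :=
  fkWeight J H E ω / ∑ ω' : GConfig E, fkWeight J H E ω'

/-- The marginal of the FK measure with ghost on the internal edges. -/
noncomputable def fkMarginal (J : Sym2 V → ℝ) (H : V → ℝ) (E : Finset (Sym2 V))
    (ωi : Config E) : ℝ :=
  ∑ ωg : V → Bool, fkProb J H E (ωi, ωg)

/-- Unnormalized zero-field random-cluster (q = 2) weight. -/
noncomputable def rcWeight (J : Sym2 V → ℝ) (E : Finset (Sym2 V)) (ω : Config E) : ℝ :=
  2 ^ (clusters E ω).card * edgeWeight J E ω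

/-- The zero-field random-cluster (q = 2) measure. -/
noncomputable def rcProb (J : Sym2 V → ℝ) (E : Finset (Sym2 V)) (ω : Config E) : ℝ :=
  rcWeight J E ω / ∑ ω' : Config E, rcWeight J E ω'

/-- The spin value (±1) of a Boolean. -/
def spin (b : Bool) : ℝ := if b then 1 else -1

/-- The product of the two spins at the endpoints of an (unordered) edge. -/
def pairSpin (σ : V → Bool) : Sym2 V → ℝ :=
  Sym2.lift ⟨fun u v => spin (σ u) * spin (σ v), fun u v => mul_comm _ _⟩

/-- Unnormalized Ising weight. -/
noncomputable def isingWeight (J : Sym2 V → ℝ) (H : V → ℝ) (E : Finset (Sym2 V))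
    (σ : V → Bool) : ℝ :=
  Real.exp ((∑ e ∈ E, J e * pairSpin σ e) + ∑ v, H v * spin (σ v))

/-- The Ising Gibbs measure. -/
noncomputable def isingProb (J : Sym2 V → ℝ) (H : V → ℝ) (E : Finset (Sym2 V))
    (σ : V → Bool) : ℝ :=
  isingWeight J H E σ / ∑ σ' : V → Bool, isingWeight J H E σ'

/-- Unnormalized Edwards–Sokal weight on pairs (spin configuration, bond configuration
with ghost); the ghost spin is `+1` (i.e. `true`). -/
noncomputable def esWeight (J : Sym2 V → ℝ) (H : V → ℝ) (E : Finset (Sym2 V))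
    (p : (V → Bool) × GConfig E) : ℝ :=
  (∏ e : {e : Sym2 V // e ∈ E},
      if p.2.1 e then
        (if ∀ u ∈ e.1, ∀ v ∈ e.1, p.1 u = p.1 v then 1 - Real.exp (-2 * J e.1) else 0)
      else Real.exp (-2 * J e.1))
  * ∏ v, if p.2.2 v then (if p.1 v = true then 1 - Real.exp (-2 * H v) else 0)
         else Real.exp (-2 * H v)

/-- The Edwards–Sokal coupling measure. -/
noncomputable def esProb (J : Sym2 V → ℝ) (H : V → ℝ) (E : Finset (Sym2 V))
    (p : (V → Bool) × GConfig E) : ℝ :=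
  esWeight J H E p / ∑ p' : (V → Bool) × GConfig E, esWeight J H E p'

end FK

namespace FK

variable {V : Type*} [Fintype V] [DecidableEq V] {E : Finset (Sym2 V)}

set_option linter.unusedSectionVars false

lemma adj_symm {ω : Config E} {u v : V} (h : adj E ω u v) : adj E ω v u := by
  obtain ⟨hne, he, ho⟩ := h
  refine ⟨hne.symm, ?_⟩
  rw [Sym2.eq_swap]
  exact ⟨he, ho⟩

lemma conn_symm {ω : Config E} {u v : V} (h : conn E ω u v) : conn E ω v u :=
  (@Relation.ReflTransGen.stdSymm _ _ ⟨fun _ _ hh => adj_symm hh⟩).symm _ _ h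

lemma mem_cluster {ω : Config E} {u v : V} : u ∈ cluster E ω v ↔ conn E ω v u := by
  simp [cluster]

lemma mem_cluster_self {ω : Config E} (v : V) : v ∈ cluster E ω v :=
  mem_cluster.mpr Relation.ReflTransGen.refl

lemma cluster_eq_of_conn {ω : Config E} {u v : V} (h : conn E ω u v) :
    cluster E ω u = cluster E ω v := by
  ext w
  simp only [mem_cluster]
  exact ⟨fun hw => (conn_symm h).trans hw, fun hw => h.trans hw⟩

lemma cluster_eq_of_mem {ω : Config E} {D : Finset V} {v : V}
    (hD : D ∈ clusters E ω) (hv : v ∈ D) : cluster E ω v = D := by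
  obtain ⟨w, -, rfl⟩ := Finset.mem_image.mp hD
  exact cluster_eq_of_conn (conn_symm (mem_cluster.mp hv))

lemma connG_of_conn {ω : GConfig E} {u v : V} (h : conn E ω.1 u v) :
    connG E ω (some u) (some v) :=
  Relation.ReflTransGen.lift some (fun _ _ hh => hh) _ _ h

lemma connG_ghost_iff {ω : GConfig E} {v : V} :
    connG E ω (some v) none ↔ ∃ u, conn E ω.1 v u ∧ ω.2 u = true := by
  constructor
  · intro h
    suffices hP : ∀ x, connG E ω x none → ∀ w, x = some w →
        ∃ u, conn E ω.1 w u ∧ ω.2 u = true from hP _ h v rfl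
    intro x hx
    refine Relation.ReflTransGen.head_induction_on hx ?_ ?_
    · intro w hw; exact absurd hw (by simp)
    · intro a c hac hcb ih w hw
      subst hw
      cases c with
      | none => exact ⟨w, Relation.ReflTransGen.refl, hac⟩
      | some z =>
        obtain ⟨u, hc, hu⟩ := ih z rfl
        exact ⟨u, Relation.ReflTransGen.head hac hc, hu⟩
  · rintro ⟨u, hc, hu⟩
    exact (connG_of_conn hc).tail hu

lemma connG_some_iff {ω : GConfig E} {v u : V} (hv : ¬ connG E ω (some v) none) :
    connG E ω (some v) (some u) ↔ conn E ω.1 v u := by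
  constructor
  · intro h
    suffices hP : ∀ y, connG E ω (some v) y → ∀ w, y = some w → conn E ω.1 v w from
      hP _ h u rfl
    intro y hy
    induction hy with
    | refl => intro w hw; injection hw with hw; subst hw; exact Relation.ReflTransGen.refl
    | tail hab hbc ih =>
      rename_i b c
      intro w hw; subst hw
      cases b with
      | none => exact absurd hab hv
      | some z => exact (ih z rfl).tail hbc
  · exact connG_of_conn

lemma kGhost_eq (ωi : Config E) (ωg : V → Bool) :
    kGhost E (ωi, ωg) =
      ((clusters E ωi).filter (fun D => ∀ u ∈ D, ωg u = false)).card := by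
  unfold kGhost
  congr 1
  ext D
  simp only [Finset.mem_image, Finset.mem_filter, Finset.mem_univ, true_and]
  constructor
  · rintro ⟨v, hv, rfl⟩
    have hset : (Finset.univ.filter fun u : V => connG E (ωi, ωg) (some v) (some u))
        = cluster E ωi v := by
      ext u
      simp only [Finset.mem_filter, Finset.mem_univ, true_and, mem_cluster]
      exact connG_some_iff hv
    rw [hset]
    refine ⟨Finset.mem_image_of_mem _ (Finset.mem_univ v), ?_⟩
    intro u hu
    rw [mem_cluster] at hu
    by_contra hne
    have hne' : ωg u = true := by revert hne; cases ωg u <;> simp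
    exact hv (connG_ghost_iff.mpr ⟨u, hu, hne'⟩)
  · rintro ⟨hD, hclosed⟩
    obtain ⟨v, -, rfl⟩ := Finset.mem_image.mp hD
    have hv : ¬ connG E (ωi, ωg) (some v) none := by
      rw [connG_ghost_iff]
      rintro ⟨u, hc, hu⟩
      have := hclosed u (mem_cluster.mpr hc)
      simp only [show ((ωi, ωg) : FK.GConfig E).2 = ωg from rfl, this] at hu
      exact Bool.false_ne_true hu
    refine ⟨v, hv, ?_⟩
    ext u
    simp only [Finset.mem_filter, Finset.mem_univ, true_and, mem_cluster]
    exact connG_some_iff hv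

lemma clusters_pairwise_disjoint {ωi : Config E} {D D' : Finset V}
    (hD : D ∈ clusters E ωi) (hD' : D' ∈ clusters E ωi) (hne : D ≠ D') :
    ∀ v ∈ D, v ∉ D' := by
  intro v hv hv'
  exact hne ((cluster_eq_of_mem hD hv).symm.trans (cluster_eq_of_mem hD' hv'))

lemma biUnion_clusters (ωi : Config E) :
    (clusters E ωi).biUnion id = Finset.univ := by
  ext v
  simp only [Finset.mem_biUnion, id, Finset.mem_univ, iff_true]
  exact ⟨cluster E ωi v, Finset.mem_image_of_mem _ (Finset.mem_univ v), mem_cluster_self v⟩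

lemma sum_card_clusters (ωi : Config E) :
    ∑ D ∈ clusters E ωi, D.card = Fintype.card V := by
  have hd : ∀ D ∈ clusters E ωi, ∀ D' ∈ clusters E ωi, D ≠ D' → Disjoint D D' :=
    fun D hD D' hD' hne => Finset.disjoint_left.mpr (clusters_pairwise_disjoint hD hD' hne)
  exact (Finset.card_biUnion hd).symm.trans (by rw [show ((clusters E ωi).biUnion fun x => x) = (clusters E ωi).biUnion id from rfl, biUnion_clusters, Finset.card_univ])

lemma sum_restrict (q : V → Prop) [DecidablePred q] [Fintype {v // q v}] [Fintype {v // ¬ q v}] (F : (V → Bool) → ℝ)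
    (hF : ∀ ω ω' : V → Bool, (∀ v, q v → ω v = ω' v) → F ω = F ω') :
    ∑ ω : V → Bool, F ω
      = (Fintype.card ({v // ¬ q v} → Bool) : ℝ) *
          ∑ a : {v // q v} → Bool, F (fun v => if h : q v then a ⟨v, h⟩ else false) := by
  classical
  rw [← Equiv.sum_comp (Equiv.piEquivPiSubtypeProd q (fun _ => Bool)).symm F,
    Fintype.sum_prod_type]
  have key : ∀ (a : {v // q v} → Bool) (b : {v // ¬ q v} → Bool),
      F ((Equiv.piEquivPiSubtypeProd q (fun _ => Bool)).symm (a, b))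
        = F (fun v => if h : q v then a ⟨v, h⟩ else false) := by
    intro a b
    apply hF
    intro v hv
    simp only [Equiv.piEquivPiSubtypeProd, Equiv.coe_fn_symm_mk]
    rw [dif_pos hv, dif_pos hv]
  calc (∑ a : {v // q v} → Bool, ∑ b : {v // ¬ q v} → Bool,
          F ((Equiv.piEquivPiSubtypeProd q (fun _ => Bool)).symm (a, b)))
      = ∑ a : {v // q v} → Bool, (Fintype.card ({v // ¬ q v} → Bool)) •
          F (fun v => if h : q v then a ⟨v, h⟩ else false) := by
        refine Finset.sum_congr rfl fun a _ => ?_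
        rw [Finset.sum_congr rfl fun b _ => key a b, Finset.sum_const, Finset.card_univ]
    _ = _ := by
        simp only [nsmul_eq_mul]
        rw [← Finset.mul_sum]

lemma block (q : V → Prop) [DecidablePred q] (F G : (V → Bool) → ℝ)
    (hF : ∀ ω ω' : V → Bool, (∀ v, q v → ω v = ω' v) → F ω = F ω')
    (hG : ∀ ω ω' : V → Bool, (∀ v, ¬ q v → ω v = ω' v) → G ω = G ω') :
    (2:ℝ) ^ Fintype.card V * ∑ ω : V → Bool, F ω * G ω
      = (∑ ω : V → Bool, F ω) * (∑ ω : V → Bool, G ω) := by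
  classical
  have hcard : (2:ℝ) ^ Fintype.card V
      = (Fintype.card ({v // q v} → Bool) : ℝ) *
          (Fintype.card ({v // ¬ q v} → Bool) : ℝ) := by
    have hc : Fintype.card (V → Bool)
        = Fintype.card ({v // q v} → Bool) * Fintype.card ({v // ¬ q v} → Bool) := by
      rw [← Fintype.card_prod]
      exact Fintype.card_congr (Equiv.piEquivPiSubtypeProd q (fun _ => Bool))
    rw [← Nat.cast_mul, ← hc, Fintype.card_fun, Fintype.card_bool]
    push_cast
    ring
  have hFG : ∑ ω : V → Bool, F ω * G ω
      = (∑ a : {v // q v} → Bool, F (fun v => if h : q v then a ⟨v, h⟩ else false))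
        * (∑ b : {v // ¬ q v} → Bool,
            G (fun v => if h : q v then false else b ⟨v, h⟩)) := by
    rw [← Equiv.sum_comp (Equiv.piEquivPiSubtypeProd q (fun _ => Bool)).symm
      (fun ω => F ω * G ω), Fintype.sum_prod_type, Fintype.sum_mul_sum]
    refine Finset.sum_congr rfl fun a _ => Finset.sum_congr rfl fun b _ => ?_
    have h1 : F ((Equiv.piEquivPiSubtypeProd q (fun _ => Bool)).symm (a, b))
        = F (fun v => if h : q v then a ⟨v, h⟩ else false) := by
      apply hF
      intro v hv
      simp only [Equiv.piEquivPiSubtypeProd, Equiv.coe_fn_symm_mk]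
      rw [dif_pos hv, dif_pos hv]
    have h2 : G ((Equiv.piEquivPiSubtypeProd q (fun _ => Bool)).symm (a, b))
        = G (fun v => if h : q v then false else b ⟨v, h⟩) := by
      apply hG
      intro v hv
      simp only [Equiv.piEquivPiSubtypeProd, Equiv.coe_fn_symm_mk]
      rw [dif_neg hv, dif_neg hv]
    rw [h1, h2]
  have hsF := sum_restrict q F hF
  have hsG : ∑ ω : V → Bool, G ω
      = (Fintype.card ({v // q v} → Bool) : ℝ) *
          ∑ b : {v // ¬ q v} → Bool,
            G (fun v => if h : q v then false else b ⟨v, h⟩) := by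
    rw [← Equiv.sum_comp (Equiv.piEquivPiSubtypeProd q (fun _ => Bool)).symm G,
      Fintype.sum_prod_type]
    have key : ∀ (a : {v // q v} → Bool) (b : {v // ¬ q v} → Bool),
        G ((Equiv.piEquivPiSubtypeProd q (fun _ => Bool)).symm (a, b))
          = G (fun v => if h : q v then false else b ⟨v, h⟩) := by
      intro a b
      apply hG
      intro v hv
      simp only [Equiv.piEquivPiSubtypeProd, Equiv.coe_fn_symm_mk]
      rw [dif_neg hv, dif_neg hv]
    calc (∑ a : {v // q v} → Bool, ∑ b : {v // ¬ q v} → Bool,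
            G ((Equiv.piEquivPiSubtypeProd q (fun _ => Bool)).symm (a, b)))
        = ∑ _a : {v // q v} → Bool, ∑ b : {v // ¬ q v} → Bool,
            G (fun v => if h : q v then false else b ⟨v, h⟩) :=
          Finset.sum_congr rfl fun a _ => Finset.sum_congr rfl fun b _ => key a b
      _ = _ := by
          rw [Finset.sum_const, Finset.card_univ, nsmul_eq_mul]
  rw [hFG, hsF, hsG, hcard]
  ring

lemma indep (S : Finset (Finset V)) :
    (∀ D ∈ S, ∀ D' ∈ S, D ≠ D' → ∀ v ∈ D, v ∉ D') →
    ∀ F : Finset V → (V → Bool) → ℝ,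
    (∀ D ∈ S, ∀ ω ω' : V → Bool, (∀ v ∈ D, ω v = ω' v) → F D ω = F D ω') →
    ((2:ℝ) ^ Fintype.card V) ^ S.card * ∑ ω : V → Bool, ∏ D ∈ S, F D ω
      = (2:ℝ) ^ Fintype.card V * ∏ D ∈ S, ∑ ω : V → Bool, F D ω := by
  classical
  induction S using Finset.induction_on with
  | empty =>
    intro _ F _
    simp only [Finset.card_empty, pow_zero, one_mul, Finset.prod_empty, mul_one]
    rw [Finset.sum_const, Finset.card_univ, nsmul_eq_mul, mul_one, Fintype.card_fun,
      Fintype.card_bool]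
    push_cast
    ring
  | @insert D S' hDS ih =>
    intro hdisj F hloc
    have hFD : ∀ ω ω' : V → Bool, (∀ v, v ∈ D → ω v = ω' v) → F D ω = F D ω' := by
      intro ω ω' hag
      exact hloc D (Finset.mem_insert_self D S') ω ω' hag
    have hGG : ∀ ω ω' : V → Bool, (∀ v, ¬ v ∈ D → ω v = ω' v) →
        (∏ D' ∈ S', F D' ω) = ∏ D' ∈ S', F D' ω' := by
      intro ω ω' hag
      refine Finset.prod_congr rfl fun D' hD' => ?_
      refine hloc D' (Finset.mem_insert_of_mem hD') ω ω' fun v hv => ?_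
      refine hag v ?_
      have hne : D' ≠ D := fun hEq => hDS (hEq ▸ hD')
      exact hdisj D' (Finset.mem_insert_of_mem hD') D (Finset.mem_insert_self D S') hne v hv
    have hb := block (fun v => v ∈ D) (F D) (fun ω => ∏ D' ∈ S', F D' ω) hFD hGG
    have ihh := ih (fun D1 hD1 D2 hD2 hne => hdisj D1 (Finset.mem_insert_of_mem hD1)
        D2 (Finset.mem_insert_of_mem hD2) hne) F
      (fun D1 hD1 => hloc D1 (Finset.mem_insert_of_mem hD1))
    rw [Finset.card_insert_of_notMem hDS, Finset.prod_insert hDS, pow_succ]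
    have hsum : ∑ ω : V → Bool, ∏ D' ∈ insert D S', F D' ω
        = ∑ ω : V → Bool, F D ω * ∏ D' ∈ S', F D' ω :=
      Finset.sum_congr rfl fun ω _ => Finset.prod_insert hDS
    rw [hsum]
    calc ((2:ℝ) ^ Fintype.card V) ^ S'.card * (2:ℝ) ^ Fintype.card V *
          ∑ ω : V → Bool, F D ω * ∏ D' ∈ S', F D' ω
        = ((2:ℝ) ^ Fintype.card V) ^ S'.card *
            ((2:ℝ) ^ Fintype.card V * ∑ ω : V → Bool, F D ω * ∏ D' ∈ S', F D' ω) := by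
          ring
      _ = ((2:ℝ) ^ Fintype.card V) ^ S'.card *
            ((∑ ω : V → Bool, F D ω) * ∑ ω : V → Bool, ∏ D' ∈ S', F D' ω) := by
          rw [hb]
      _ = (∑ ω : V → Bool, F D ω) *
            (((2:ℝ) ^ Fintype.card V) ^ S'.card * ∑ ω : V → Bool, ∏ D' ∈ S', F D' ω) := by
          ring
      _ = (∑ ω : V → Bool, F D ω) *
            ((2:ℝ) ^ Fintype.card V * ∏ D' ∈ S', ∑ ω : V → Bool, F D' ω) := by
          rw [ihh]
      _ = (2:ℝ) ^ Fintype.card V *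
            ((∑ ω : V → Bool, F D ω) * ∏ D' ∈ S', ∑ ω : V → Bool, F D' ω) := by
          ring

lemma tanh_eq_exp (x : ℝ) :
    Real.tanh x = (1 - Real.exp (-2 * x)) / (1 + Real.exp (-2 * x)) := by
  rw [Real.tanh_eq_sinh_div_cosh, Real.sinh_eq, Real.cosh_eq]
  have hb : Real.exp (-2 * x) = Real.exp (-x) * Real.exp (-x) := by
    rw [← Real.exp_add]; ring_nf
  have hab : Real.exp x * Real.exp (-x) = 1 := by
    rw [← Real.exp_add]; simp
  have h1 : Real.exp x + Real.exp (-x) > 0 :=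
    add_pos (Real.exp_pos x) (Real.exp_pos (-x))
  have h2 : (1:ℝ) + Real.exp (-2 * x) > 0 :=
    add_pos one_pos (Real.exp_pos _)
  have hden : Real.exp x + Real.exp (-x) ≠ 0 := ne_of_gt h1
  have hden2 : (1:ℝ) + Real.exp (-2 * x) ≠ 0 := ne_of_gt h2
  rw [div_div_div_comm, div_self (two_ne_zero), div_one]
  rw [div_eq_div_iff hden hden2]
  rw [hb]
  linear_combination (2 * Real.exp (-x)) * hab

lemma master (H : V → ℝ) (ωi : Config E) (p : Finset V → Prop) [DecidablePred p] :
    ∑ ωg : V → Bool,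
      (if ∀ D ∈ clusters E ωi, p D → ∃ u ∈ D, ωg u = true then (1:ℝ) else 0) *
        ((2:ℝ) ^ kGhost E (ωi, ωg) *
          ∏ v, (if ωg v then 1 - Real.exp (-2 * H v) else Real.exp (-2 * H v)))
    = ∏ D ∈ clusters E ωi,
        (if p D then 1 - Real.exp (-2 * ∑ v ∈ D, H v)
         else 1 + Real.exp (-2 * ∑ v ∈ D, H v)) := by
  classical
  set h : V → Bool → ℝ :=
    fun v b => if b then 1 - Real.exp (-2 * H v) else Real.exp (-2 * H v) with hh
  set F : Finset V → (V → Bool) → ℝ := fun D ωg =>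
    (if p D then (if ∃ u ∈ D, ωg u = true then (1:ℝ) else 0) else 1) *
      ((if ∃ u ∈ D, ωg u = true then (1:ℝ) else 2) * ∏ v ∈ D, h v (ωg v)) with hF
  set R : Finset V → ℝ := fun D =>
    (if p D then 1 - Real.exp (-2 * ∑ v ∈ D, H v)
     else 1 + Real.exp (-2 * ∑ v ∈ D, H v)) with hR
  have hdisj : ∀ D ∈ clusters E ωi, ∀ D' ∈ clusters E ωi, D ≠ D' → ∀ v ∈ D, v ∉ D' :=
    fun D hD D' hD' hne => clusters_pairwise_disjoint hD hD' hne
  have hloc : ∀ D ∈ clusters E ωi, ∀ ω ω' : V → Bool,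
      (∀ v ∈ D, ω v = ω' v) → F D ω = F D ω' := by
    intro D _ ω ω' hag
    have hex : (∃ u ∈ D, ω u = true) ↔ ∃ u ∈ D, ω' u = true := by
      constructor
      · rintro ⟨u, hu, ht⟩; exact ⟨u, hu, (hag u hu) ▸ ht⟩
      · rintro ⟨u, hu, ht⟩; exact ⟨u, hu, (hag u hu).symm ▸ ht⟩
    simp only [hF]
    rw [if_congr hex rfl rfl, if_congr hex rfl rfl,
      Finset.prod_congr rfl fun v hv => by rw [hag v hv]]
  -- Step 1: pointwise factorization
  have step1 : ∀ ωg : V → Bool,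
      (if ∀ D ∈ clusters E ωi, p D → ∃ u ∈ D, ωg u = true then (1:ℝ) else 0) *
        ((2:ℝ) ^ kGhost E (ωi, ωg) * ∏ v, h v (ωg v))
      = ∏ D ∈ clusters E ωi, F D ωg := by
    intro ωg
    have ha : (if ∀ D ∈ clusters E ωi, p D → ∃ u ∈ D, ωg u = true then (1:ℝ) else 0)
        = ∏ D ∈ clusters E ωi,
            (if p D then (if ∃ u ∈ D, ωg u = true then (1:ℝ) else 0) else 1) := by
      by_cases hall : ∀ D ∈ clusters E ωi, p D → ∃ u ∈ D, ωg u = true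
      · rw [if_pos hall]
        refine (Finset.prod_eq_one ?_).symm
        intro D hD
        by_cases hp : p D
        · rw [if_pos hp, if_pos (hall D hD hp)]
        · rw [if_neg hp]
      · rw [if_neg hall]
        push_neg at hall
        obtain ⟨D, hD, hpD, hcl⟩ := hall
        refine (Finset.prod_eq_zero hD ?_).symm
        rw [if_pos hpD, if_neg]
        rintro ⟨u, hu, ht⟩
        exact hcl u hu ht
    have hb : (2:ℝ) ^ kGhost E (ωi, ωg)
        = ∏ D ∈ clusters E ωi, (if ∃ u ∈ D, ωg u = true then (1:ℝ) else 2) := by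
      rw [kGhost_eq, Finset.card_filter, ← Finset.prod_pow_eq_pow_sum]
      refine Finset.prod_congr rfl ?_
      intro D _
      by_cases hex : ∃ u ∈ D, ωg u = true
      · have hnall : ¬ ∀ u ∈ D, ωg u = false := by
          intro hallf
          obtain ⟨u, hu, ht⟩ := hex
          rw [hallf u hu] at ht
          exact Bool.false_ne_true ht
        rw [if_neg hnall, if_pos hex]
        norm_num
      · have hallf : ∀ u ∈ D, ωg u = false := by
          intro u hu
          cases h2 : ωg u with
          | false => rfl
          | true => exact absurd ⟨u, hu, h2⟩ hex
        rw [if_pos hallf, if_neg hex]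
        norm_num
    have hc : (∏ v, h v (ωg v))
        = ∏ D ∈ clusters E ωi, ∏ v ∈ D, h v (ωg v) := by
      have hpd : (↑(clusters E ωi) : Set (Finset V)).PairwiseDisjoint id := by
        intro D hD D' hD' hne
        exact Finset.disjoint_left.mpr
          (clusters_pairwise_disjoint (Finset.mem_coe.mp hD) (Finset.mem_coe.mp hD') hne)
      have := Finset.prod_biUnion (f := fun v => h v (ωg v)) hpd
      rw [biUnion_clusters] at this
      exact this
    rw [ha, hb, hc, ← Finset.prod_mul_distrib, ← Finset.prod_mul_distrib]
  rw [Finset.sum_congr rfl fun ωg _ => step1 ωg]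
  -- per-cluster sums
  have hper : ∀ D ∈ clusters E ωi, (∑ ωg : V → Bool, F D ωg)
      = (2:ℝ) ^ (Fintype.card V - D.card) * R D := by
    intro D hD
    rw [sum_restrict (fun v => v ∈ D) (F D)
      (fun ω ω' hag => hloc D hD ω ω' (fun v hv => hag v hv))]
    congr 1
    · have hgen : ∀ (inst : Fintype ({v // ¬ v ∈ D} → Bool)),
          @Fintype.card _ inst = 2 ^ (Fintype.card V - D.card) := by
        intro inst
        rw [Subsingleton.elim inst (Pi.instFintype), Fintype.card_fun, Fintype.card_bool]
        congr 1
        rw [Fintype.card_subtype_compl, Fintype.card_coe]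
      rw [hgen]
      push_cast
      ring
    -- inner sum over configurations on D
    have hsel : ∀ a : {v // v ∈ D} → Bool,
        F D (fun v => if hv : v ∈ D then a ⟨v, hv⟩ else false)
        = (if p D then (if ∃ u, a u = true then (1:ℝ) else 0) else 1) *
            ((if ∃ u, a u = true then (1:ℝ) else 2) *
              ∏ u : {v // v ∈ D}, h u.1 (a u)) := by
      intro a
      have happ : ∀ (u : V) (hu : u ∈ D),
          (fun v => if hv : v ∈ D then a ⟨v, hv⟩ else false) u = a ⟨u, hu⟩ := by
        intro u hu
        show (if hv : u ∈ D then a ⟨u, hv⟩ else false) = a ⟨u, hu⟩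
        split
        · rfl
        · next hcon => exact absurd hu hcon
      have hex : (∃ u ∈ D, (fun v => if hv : v ∈ D then a ⟨v, hv⟩ else false) u = true)
          ↔ ∃ u, a u = true := by
        constructor
        · rintro ⟨u, hu, ht⟩
          rw [happ u hu] at ht
          exact ⟨⟨u, hu⟩, ht⟩
        · rintro ⟨u, ht⟩
          refine ⟨u.1, u.2, ?_⟩
          rw [happ u.1 u.2]
          exact ht
      have hprod : (∏ v ∈ D, h v ((fun v => if hv : v ∈ D then a ⟨v, hv⟩ else false) v))
          = ∏ u : {v // v ∈ D}, h u.1 (a u) := by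
        rw [← Finset.prod_coe_sort D
          (fun v => h v ((fun v => if hv : v ∈ D then a ⟨v, hv⟩ else false) v))]
        exact Finset.prod_congr rfl fun u _ => by rw [happ u.1 u.2]
      simp only [hF]
      rw [if_congr hex rfl rfl, if_congr hex rfl rfl, hprod]
    rw [Finset.sum_congr rfl fun a _ => hsel a]
    -- now compute the sum over a
    have hA : (∑ a : {v // v ∈ D} → Bool, ∏ u : {v // v ∈ D}, h u.1 (a u)) = 1 := by
      rw [← Fintype.prod_sum (fun (u : {v // v ∈ D}) (t : Bool) => h u.1 t)]
      refine Finset.prod_eq_one ?_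
      intro u _
      rw [Fintype.sum_bool]
      simp [hh]
    have hsumH : (∑ u : {v // v ∈ D}, H u.1) = ∑ v ∈ D, H v :=
      Finset.sum_coe_sort D H
    have hB : (∑ a : {v // v ∈ D} → Bool,
        (if a = (fun _ => false) then (∏ u : {v // v ∈ D}, h u.1 (a u)) else 0))
        = Real.exp (-2 * ∑ v ∈ D, H v) := by
      refine (Finset.sum_eq_single (fun _ => false) ?_ ?_).trans ?_
      · intro b _ hb; exact if_neg hb
      · intro habs; exact absurd (Finset.mem_univ _) habs
      rw [if_pos rfl]
      have hfalse : ∀ u : {v // v ∈ D}, h u.1 false = Real.exp (-2 * H u.1) :=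
        fun u => rfl
      rw [Finset.prod_congr rfl fun u _ => hfalse u, ← Real.exp_sum]
      rw [← hsumH, Finset.mul_sum]
    have hconst : ∀ b : {v // v ∈ D} → Bool,
        (¬ ∃ u, b u = true) ↔ b = (fun _ => false) := by
      intro b
      constructor
      · intro hb
        funext u
        cases hbu : b u with
        | false => rfl
        | true => exact absurd ⟨u, hbu⟩ hb
      · rintro rfl ⟨u, hu⟩
        exact Bool.false_ne_true hu
    by_cases hp : p D
    · simp only [hR, if_pos hp]
      have hpt : ∀ b : {v // v ∈ D} → Bool,
          (if ∃ u, b u = true then (1:ℝ) else 0) *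
            ((if ∃ u, b u = true then (1:ℝ) else 2) * ∏ u : {v // v ∈ D}, h u.1 (b u))
          = (∏ u : {v // v ∈ D}, h u.1 (b u)) -
            (if b = (fun _ => false) then (∏ u : {v // v ∈ D}, h u.1 (b u)) else 0) := by
        intro b
        by_cases hbex : ∃ u, b u = true
        · rw [if_pos hbex, if_pos hbex, if_neg]
          · ring
          · intro hbf
            obtain ⟨u, hu⟩ := hbex
            rw [hbf] at hu
            exact Bool.false_ne_true hu
        · rw [if_neg hbex, if_neg hbex, if_pos ((hconst b).mp hbex)]
          ring
      rw [Finset.sum_congr rfl fun b _ => hpt b, Finset.sum_sub_distrib, hA, hB]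
    · simp only [hR, if_neg hp]
      have hpt : ∀ b : {v // v ∈ D} → Bool,
          (1:ℝ) * ((if ∃ u, b u = true then (1:ℝ) else 2) *
            ∏ u : {v // v ∈ D}, h u.1 (b u))
          = (∏ u : {v // v ∈ D}, h u.1 (b u)) +
            (if b = (fun _ => false) then (∏ u : {v // v ∈ D}, h u.1 (b u)) else 0) := by
        intro b
        by_cases hbex : ∃ u, b u = true
        · rw [if_pos hbex, if_neg]
          · ring
          · intro hbf
            obtain ⟨u, hu⟩ := hbex
            rw [hbf] at hu
            exact Bool.false_ne_true hu
        · rw [if_neg hbex, if_pos ((hconst b).mp hbex)]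
          ring
      rw [Finset.sum_congr rfl fun b _ => hpt b, Finset.sum_add_distrib, hA, hB]
  -- assemble via indep and cancel powers of 2
  have hind := indep (clusters E ωi) hdisj F hloc
  rw [Finset.prod_congr rfl hper] at hind
  rw [Finset.prod_mul_distrib, Finset.prod_pow_eq_pow_sum] at hind
  have hexp : Fintype.card V + ∑ D ∈ clusters E ωi, (Fintype.card V - D.card)
      = (clusters E ωi).card * Fintype.card V := by
    have h1 : ∑ D ∈ clusters E ωi, ((Fintype.card V - D.card) + D.card)
        = (clusters E ωi).card * Fintype.card V := by
      rw [Finset.sum_congr rfl fun D _ => Nat.sub_add_cancel (Finset.card_le_univ D)]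
      rw [Finset.sum_const, smul_eq_mul]
    rw [Finset.sum_add_distrib, sum_card_clusters] at h1
    omega
  have hNn : ((2:ℝ) ^ Fintype.card V) ^ (clusters E ωi).card
      = (2:ℝ) ^ Fintype.card V *
          (2:ℝ) ^ (∑ D ∈ clusters E ωi, (Fintype.card V - D.card)) := by
    rw [← pow_mul, ← pow_add, hexp, Nat.mul_comm]
  rw [hNn] at hind
  have h2pos : ((2:ℝ) ^ Fintype.card V *
      (2:ℝ) ^ (∑ D ∈ clusters E ωi, (Fintype.card V - D.card))) ≠ 0 :=
    mul_ne_zero (pow_ne_zero _ two_ne_zero) (pow_ne_zero _ two_ne_zero)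
  have := mul_left_cancel₀ h2pos
    (hind.trans (by ring))
  exact this


end FK

/-- conditional ghost-connection probabilities and their independence. -/
theorem fk_ghost_connection_conditional
    {V : Type*} [Fintype V] [DecidableEq V]
    (E : Finset (Sym2 V)) (hE : ∀ e ∈ E, ¬ e.IsDiag)
    (J : Sym2 V → ℝ) (hJ : ∀ e ∈ E, 0 ≤ J e)
    (H : V → ℝ) (hH : ∀ v, 0 ≤ H v)
    (ωi : FK.Config E) (hpos : 0 < FK.fkMarginal J H E ωi)
    (m : ℕ) (C : Fin m → Finset V) (hinj : Function.Injective C)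
    (hC : ∀ j, C j ∈ FK.clusters E ωi) :
    (∑ ωg : V → Bool,
        if ∀ j, ∃ v ∈ C j, FK.connG E (ωi, ωg) (some v) none
        then FK.fkProb J H E (ωi, ωg) else 0)
      / FK.fkMarginal J H E ωi
    = ∏ j, Real.tanh (∑ v ∈ C j, H v) := by
  classical
  set Z : ℝ := ∑ ω' : FK.GConfig E, FK.fkWeight J H E ω' with hZdef
  have hfw : ∀ ωg : V → Bool, FK.fkWeight J H E (ωi, ωg)
      = FK.edgeWeight J E ωi * ((2:ℝ) ^ FK.kGhost E (ωi, ωg) *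
          ∏ v, (if ωg v then 1 - Real.exp (-2 * H v) else Real.exp (-2 * H v))) := by
    intro ωg
    simp only [FK.fkWeight]
    ring
  have hev : ∀ ωg : V → Bool,
      (∀ j, ∃ v ∈ C j, FK.connG E (ωi, ωg) (some v) none)
        ↔ ∀ D ∈ FK.clusters E ωi, D ∈ Finset.image C Finset.univ →
            ∃ u ∈ D, ωg u = true := by
    intro ωg
    constructor
    · intro hj D _ hDim
      obtain ⟨j, -, rfl⟩ := Finset.mem_image.mp hDim
      obtain ⟨v, hv, hconn⟩ := hj j
      obtain ⟨u, hcu, hu⟩ := FK.connG_ghost_iff.mp hconn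
      have hmem : u ∈ FK.cluster E ωi v := FK.mem_cluster.mpr hcu
      rw [FK.cluster_eq_of_mem (hC j) hv] at hmem
      exact ⟨u, hmem, hu⟩
    · intro hD j
      obtain ⟨u, hu, hou⟩ := hD (C j) (hC j) (Finset.mem_image_of_mem C (Finset.mem_univ j))
      exact ⟨u, hu, Relation.ReflTransGen.single hou⟩
  have hmarg : FK.fkMarginal J H E ωi
      = (FK.edgeWeight J E ωi *
          ∏ D ∈ FK.clusters E ωi, (1 + Real.exp (-2 * ∑ v ∈ D, H v))) / Z := by
    rw [FK.fkMarginal]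
    have hterm : ∀ ωg : V → Bool, FK.fkProb J H E (ωi, ωg)
        = FK.edgeWeight J E ωi *
            ((if ∀ D ∈ FK.clusters E ωi, False → ∃ u ∈ D, ωg u = true then (1:ℝ) else 0) *
              ((2:ℝ) ^ FK.kGhost E (ωi, ωg) *
                ∏ v, (if ωg v then 1 - Real.exp (-2 * H v) else Real.exp (-2 * H v)))) / Z := by
      intro ωg
      simp only [FK.fkProb]
      rw [← hZdef, hfw ωg, if_pos (fun D _ hf => hf.elim)]
      ring
    rw [Finset.sum_congr rfl fun ωg _ => hterm ωg, ← Finset.sum_div, ← Finset.mul_sum,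
      FK.master H ωi (fun _ => False)]
    rw [Finset.prod_congr rfl fun D _ => if_neg not_false]
  have hZ : Z ≠ 0 := by
    intro h0
    rw [hmarg, h0, div_zero] at hpos
    exact lt_irrefl 0 hpos
  have ha0 : FK.edgeWeight J E ωi ≠ 0 := by
    intro h0
    rw [hmarg, h0, zero_mul, zero_div] at hpos
    exact lt_irrefl 0 hpos
  have hd0 : (∏ D ∈ FK.clusters E ωi, (1 + Real.exp (-2 * ∑ v ∈ D, H v))) ≠ 0 :=
    ne_of_gt (Finset.prod_pos fun D _ => by positivity)
  have hnum_eq : (∑ ωg : V → Bool,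
        if ∀ j, ∃ v ∈ C j, FK.connG E (ωi, ωg) (some v) none
        then FK.fkProb J H E (ωi, ωg) else 0)
      = (FK.edgeWeight J E ωi *
          ∏ D ∈ FK.clusters E ωi,
            (if D ∈ Finset.image C Finset.univ
             then 1 - Real.exp (-2 * ∑ v ∈ D, H v)
             else 1 + Real.exp (-2 * ∑ v ∈ D, H v))) / Z := by
    have hterm : ∀ ωg : V → Bool,
        (if ∀ j, ∃ v ∈ C j, FK.connG E (ωi, ωg) (some v) none
         then FK.fkProb J H E (ωi, ωg) else 0)
        = FK.edgeWeight J E ωi *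
            ((if ∀ D ∈ FK.clusters E ωi, D ∈ Finset.image C Finset.univ →
                ∃ u ∈ D, ωg u = true then (1:ℝ) else 0) *
              ((2:ℝ) ^ FK.kGhost E (ωi, ωg) *
                ∏ v, (if ωg v then 1 - Real.exp (-2 * H v) else Real.exp (-2 * H v)))) / Z := by
      intro ωg
      by_cases hevg : ∀ j, ∃ v ∈ C j, FK.connG E (ωi, ωg) (some v) none
      · rw [if_pos hevg, if_pos ((hev ωg).mp hevg)]
        simp only [FK.fkProb]
        rw [← hZdef, hfw ωg]
        ring
      · rw [if_neg hevg, if_neg (fun hx => hevg ((hev ωg).mpr hx))]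
        ring
    rw [Finset.sum_congr rfl fun ωg _ => hterm ωg, ← Finset.sum_div, ← Finset.mul_sum,
      FK.master H ωi (fun D => D ∈ Finset.image C Finset.univ)]
  rw [hnum_eq, hmarg, div_div_div_comm, div_self hZ, div_one,
    mul_div_mul_left _ _ ha0, ← Finset.prod_div_distrib]
  have hstep : ∀ D ∈ FK.clusters E ωi,
      ((if D ∈ Finset.image C Finset.univ
        then 1 - Real.exp (-2 * ∑ v ∈ D, H v)
        else 1 + Real.exp (-2 * ∑ v ∈ D, H v)) /
          (1 + Real.exp (-2 * ∑ v ∈ D, H v)))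
      = (if D ∈ Finset.image C Finset.univ
         then (1 - Real.exp (-2 * ∑ v ∈ D, H v)) / (1 + Real.exp (-2 * ∑ v ∈ D, H v))
         else 1) := by
    intro D _
    by_cases hm : D ∈ Finset.image C Finset.univ
    · rw [if_pos hm, if_pos hm]
    · rw [if_neg hm, if_neg hm, div_self (by positivity)]
  rw [Finset.prod_congr rfl hstep, ← Finset.prod_filter, Finset.filter_mem_eq_inter,
    Finset.inter_eq_right.mpr
      (Finset.image_subset_iff.mpr fun j _ => hC j),
    Finset.prod_image (fun j _ j' _ hjj => hinj hjj)]
  exact Finset.prod_congr rfl fun j _ => (FK.tanh_eq_exp _).symm
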